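/- With ρ(δ) = (1/(2J₂(2))) e^{−3|δ|/2} J₁(2e^{−|δ|/2}) and g(δ) = (1/4)(8 + 4δ − e^{δ}(5−2δ)) for δ < 0, g(δ) = (1/4)(4 − e^{−δ}) for δ ≥ 0, one has ∫_ℝ ρ(δ) g(δ) dδ = 3/2 − J₁(2)/(2J₂(2)). -/

import Mathlib

open Real MeasureTheory

/-- The Bessel function of the first kind of integer order `n`. -/
noncomputable def besselJ (n : ℕ) (x : ℝ) : ℝ :=
  ∑' m : ℕ, (-1 : ℝ) ^ m / (m.factorial * (m + n).factorial) * (x / 2) ^ (2 * m + n)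

/-- The stationary density of the difference chain. -/
noncomputable def ρstat (d : ℝ) : ℝ :=
  (1 / (2 * besselJ 2 2)) * exp (-(3 * |d| / 2)) * besselJ 1 (2 * exp (-(|d| / 2)))

/-- The conditional expected one-step growth. -/
noncomputable def gstep (δ : ℝ) : ℝ :=
  if δ < 0 then (1 / 4) * (8 + 4 * δ - exp δ * (5 - 2 * δ))
  else (1 / 4) * (4 - exp (-δ))

open Filter Set Topology

namespace PercAux

noncomputable def aa (m : ℕ) : ℝ := (-1) ^ m / (m.factorial * (m + 1).factorial)

lemma fac_pos (m : ℕ) : (0:ℝ) < m.factorial := by exact_mod_cast m.factorial_pos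

lemma abs_aa (m : ℕ) : |aa m| ≤ 1 / m.factorial := by
  have h1 : (0:ℝ) < m.factorial := fac_pos m
  have h2 : (1:ℝ) ≤ (m+1).factorial := by exact_mod_cast (m+1).factorial_pos
  have : |aa m| = 1 / (m.factorial * (m+1).factorial) := by
    rw [aa, abs_div, abs_pow, abs_neg, abs_one, one_pow, abs_of_pos (by positivity)]
  rw [this]
  apply one_div_le_one_div_of_le h1
  nlinarith

lemma summable_fac : Summable (fun m : ℕ => (1:ℝ) / m.factorial) := by
  simpa using Real.summable_pow_div_factorial 1

lemma summable_of_bound {g : ℕ → ℝ} (K : ℝ) (h : ∀ m, ‖g m‖ ≤ K / m.factorial) :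
    Summable g := by
  refine Summable.of_norm_bounded ((summable_fac.mul_left K).congr fun m => ?_) h
  rw [mul_one_div]

lemma besselJ1_eq (y : ℝ) : besselJ 1 (2 * y) = ∑' m, aa m * y ^ (2*m+1) := by
  unfold besselJ aa
  congr 1
  funext m
  have : (2*y)/2 = y := by ring
  rw [this]

lemma besselJ1_two : besselJ 1 2 = ∑' m, aa m := by
  have h := besselJ1_eq 1
  norm_num at h
  convert h using 2

lemma besselJ2_two : besselJ 2 2 = ∑' m : ℕ, (-1:ℝ)^m / (m.factorial * (m+2).factorial) := by
  unfold besselJ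
  congr 1
  funext m
  norm_num

lemma gstep_abs (δ : ℝ) : |gstep δ| ≤ (13 + 6 * |δ|) / 4 := by
  unfold gstep
  split_ifs with h
  · rw [abs_of_neg h, abs_le]
    have h0 : exp δ ≤ 1 := exp_le_one_iff.mpr h.le
    have h1 := exp_pos δ
    constructor <;> nlinarith
  · push_neg at h
    rw [abs_of_nonneg h, abs_le]
    have h0 : exp (-δ) ≤ 1 := exp_le_one_iff.mpr (by linarith)
    have h1 := exp_pos (-δ)
    constructor <;> nlinarith

lemma measurable_gstep : Measurable gstep := by
  unfold gstep
  refine Measurable.ite measurableSet_Iio ?_ ?_ <;> fun_prop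



lemma tendsto_le (a b k : ℝ) (hk : 0 < k) :
    Tendsto (fun x : ℝ => (a + b * x) * exp (-(k * x))) atTop (𝓝 0) := by
  have h1 : Tendsto (fun x : ℝ => k * x) atTop atTop :=
    Tendsto.const_mul_atTop hk tendsto_id
  have h4 : Tendsto (fun x : ℝ => exp (-(k*x))) atTop (𝓝 0) :=
    Real.tendsto_exp_neg_atTop_nhds_zero.comp h1
  have h3 : Tendsto (fun y : ℝ => y * exp (-y)) atTop (𝓝 0) := by
    simpa using Real.tendsto_pow_mul_exp_neg_atTop_nhds_zero 1
  have h5 : Tendsto (fun x : ℝ => (k*x) * exp (-(k*x))) atTop (𝓝 0) := h3.comp h1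
  have h6 := (h4.const_mul a).add (h5.const_mul (b/k))
  rw [mul_zero, mul_zero, add_zero] at h6
  refine h6.congr fun x => ?_
  field_simp

lemma integrableOn_le (A B k : ℝ) (hk : 0 < k) :
    IntegrableOn (fun x : ℝ => (A + B * x) * exp (-(k * x))) (Ioi 0) := by
  have hbase : IntegrableOn (fun x : ℝ => exp (-(k/2) * x)) (Ioi 0) :=
    exp_neg_integrableOn_Ioi 0 (by linarith)
  apply Integrable.mono' (hbase.const_mul (|A| + |B| * (2/k)))
  · exact Measurable.aestronglyMeasurable (by fun_prop)
  · filter_upwards [ae_restrict_mem measurableSet_Ioi] with x hx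
    have hx0 : (0:ℝ) < x := hx
    have e1 : k/2 * x ≤ exp (k/2*x) := by linarith [Real.add_one_le_exp (k/2*x)]
    have e2 : (1:ℝ) ≤ exp (k/2 * x) := by
      rw [← Real.exp_zero]
      exact Real.exp_le_exp.mpr (by positivity)
    have hx2 : x ≤ 2/k * exp (k/2*x) := by
      have h := mul_le_mul_of_nonneg_left e1 (le_of_lt (by positivity : (0:ℝ) < 2/k))
      have h0 : x = 2/k * (k/2*x) := by field_simp
      linarith
    have habs : |A + B*x| ≤ |A| + |B| * x := by
      calc |A + B*x| ≤ |A| + |B*x| := abs_add_le _ _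
        _ = |A| + |B| * x := by rw [abs_mul, abs_of_pos hx0]
    have key : |A + B*x| ≤ (|A| + |B| * (2/k)) * exp (k/2*x) := by
      have hB : |B| * x ≤ |B| * (2/k * exp (k/2*x)) :=
        mul_le_mul_of_nonneg_left hx2 (abs_nonneg B)
      have hA : |A| ≤ |A| * exp (k/2*x) := le_mul_of_one_le_right (abs_nonneg A) e2
      nlinarith [mul_nonneg (abs_nonneg B) (le_of_lt hx0)]
    calc ‖(A + B * x) * exp (-(k * x))‖ = |A + B*x| * exp (-(k*x)) := by
          rw [norm_mul, Real.norm_eq_abs, Real.norm_eq_abs, abs_of_pos (exp_pos _)]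
      _ ≤ ((|A| + |B| * (2/k)) * exp (k/2*x)) * exp (-(k*x)) :=
          mul_le_mul_of_nonneg_right key (exp_pos _).le
      _ = (|A| + |B| * (2/k)) * exp (-(k/2) * x) := by
          rw [mul_assoc, ← Real.exp_add]
          congr 2
          ring

lemma hasDeriv_le (A B k : ℝ) (hk : 0 < k) (x : ℝ) :
    HasDerivAt (fun x : ℝ => -exp (-(k * x)) * ((A + B * x)/k + B/k^2))
      ((A + B * x) * exp (-(k * x))) x := by
  have h1 : HasDerivAt (fun x : ℝ => -(k * x)) (-k) x := by
    exact ((hasDerivAt_id' x).const_mul k).neg.congr_deriv (by ring)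
  have h2 := h1.exp
  have h3 : HasDerivAt (fun x : ℝ => (A + B * x)/k + B/k^2) (B/k) x := by
    have hb : HasDerivAt (fun x : ℝ => A + B * x) B x := by
      exact ((hasDerivAt_const x A).add ((hasDerivAt_id' x).const_mul B)).congr_deriv (by ring)
    simpa using (hb.div_const k).add_const (B/k^2)
  have h : HasDerivAt (fun x : ℝ => -exp (-(k * x)) * ((A + B * x)/k + B/k^2))
      (-(exp (-(k * x)) * -k) * ((A + B * x)/k + B/k^2) + -exp (-(k * x)) * (B/k)) x :=
    h2.neg.mul h3
  convert h using 1
  have hk0 : k ≠ 0 := ne_of_gt hk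
  field_simp
  ring

lemma integral_Ioi_le (A B k : ℝ) (hk : 0 < k) :
    ∫ x in Ioi (0:ℝ), (A + B * x) * exp (-(k * x)) = A/k + B/k^2 := by
  have htend : Tendsto (fun x : ℝ => -exp (-(k * x)) * ((A + B * x)/k + B/k^2))
      atTop (𝓝 0) := by
    refine (tendsto_le (-(A/k) - B/k^2) (-(B/k)) k hk).congr fun x => ?_
    ring
  have h := integral_Ioi_of_hasDerivAt_of_tendsto'
      (fun x _ => hasDeriv_le A B k hk x) (integrableOn_le A B k hk) htend
  rw [h]
  norm_num [Real.exp_zero]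

lemma integrableOn_le_Iio (A B k : ℝ) (hk : 0 < k) :
    IntegrableOn (fun x : ℝ => (A + B * x) * exp (k * x)) (Iio (0:ℝ)) := by
  rw [← (Measure.measurePreserving_neg (volume : Measure ℝ)).integrableOn_comp_preimage
      (Homeomorph.neg ℝ).measurableEmbedding]
  simp only [Function.comp_def, neg_preimage, neg_Iio, neg_zero]
  refine (integrableOn_le A (-B) k hk).congr_fun (fun x hx => ?_) measurableSet_Ioi
  rw [show k * -x = -(k*x) from by ring]
  ring

lemma integral_Iio_le (A B k : ℝ) (hk : 0 < k) :
    ∫ x in Iio (0:ℝ), (A + B * x) * exp (k * x) = A/k - B/k^2 := by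
  rw [← integral_Iic_eq_integral_Iio]
  have h := integral_comp_neg_Iic (0:ℝ) (fun x => (A + B * (-x)) * exp (k * (-x)))
  simp only [neg_neg, neg_zero] at h
  rw [h]
  have heq : ∀ x : ℝ, (A + B * -x) * exp (k * -x) = (A + (-B) * x) * exp (-(k * x)) := by
    intro x
    rw [show k * -x = -(k*x) from by ring]
    ring
  simp_rw [heq]
  rw [integral_Ioi_le A (-B) k hk]
  ring


noncomputable def ff (m : ℕ) (δ : ℝ) : ℝ :=
  (1 / (2 * besselJ 2 2)) * aa m * exp (-(((m:ℝ) + 2) * |δ|)) * gstep δ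

lemma hpt (δ : ℝ) : ρstat δ * gstep δ = ∑' m, ff m δ := by
  rw [ρstat, besselJ1_eq (exp (-(|δ| / 2))), ← tsum_mul_left, ← tsum_mul_right]
  refine tsum_congr fun m => ?_
  unfold ff
  have h : exp (-(3 * |δ| / 2)) * (exp (-(|δ|/2)))^(2*m+1) = exp (-(((m:ℝ)+2) * |δ|)) := by
    rw [← Real.exp_nat_mul, ← Real.exp_add]
    congr 1
    push_cast
    ring
  rw [← h]
  ring

lemma ff_norm_le (m : ℕ) (δ : ℝ) :
    ‖ff m δ‖ ≤ (|1/(2*besselJ 2 2)| / m.factorial) * ((13 + 6 * |δ|)/4 * exp (-(2 * |δ|))) := by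
  have hE : exp (-(((m:ℝ)+2) * |δ|)) ≤ exp (-(2 * |δ|)) := by
    apply Real.exp_le_exp.mpr
    nlinarith [abs_nonneg δ, (Nat.cast_nonneg m : (0:ℝ) ≤ (m:ℝ))]
  have h1 : ‖ff m δ‖ = |1/(2*besselJ 2 2)| * |aa m| * exp (-(((m:ℝ)+2) * |δ|)) * |gstep δ| := by
    rw [ff, Real.norm_eq_abs, abs_mul, abs_mul, abs_mul, abs_of_pos (exp_pos _)]
  have t1 : |aa m| * |gstep δ| ≤ (1/m.factorial) * ((13 + 6 * |δ|)/4) :=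
    mul_le_mul (abs_aa m) (gstep_abs δ) (abs_nonneg _) (by positivity)
  calc ‖ff m δ‖ = |1/(2*besselJ 2 2)| * ((|aa m| * |gstep δ|) * exp (-(((m:ℝ)+2) * |δ|))) := by
        rw [h1]; ring
    _ ≤ |1/(2*besselJ 2 2)| * (((1/m.factorial) * ((13 + 6 * |δ|)/4)) * exp (-(2 * |δ|))) := by
        apply mul_le_mul_of_nonneg_left _ (abs_nonneg _)
        exact mul_le_mul t1 hE (exp_pos _).le (by positivity)
    _ = (|1/(2*besselJ 2 2)| / m.factorial) * ((13 + 6 * |δ|)/4 * exp (-(2 * |δ|))) := by ring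

lemma integrable_base :
    Integrable (fun δ : ℝ => (13 + 6 * |δ|)/4 * exp (-(2 * |δ|))) := by
  rw [← integrableOn_univ, ← Iio_union_Ici (a := (0:ℝ)), integrableOn_union]
  constructor
  · refine ((integrableOn_le_Iio (13/4) (-(3/2)) 2 (by norm_num)).congr_fun
      (fun x hx => ?_) measurableSet_Iio)
    have hx : x < 0 := hx
    rw [abs_of_neg hx, show -(2 * -x) = 2 * x from by ring]
    ring
  · rw [integrableOn_Ici_iff_integrableOn_Ioi]
    refine ((integrableOn_le (13/4) (3/2) 2 (by norm_num)).congr_fun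
      (fun x hx => ?_) measurableSet_Ioi)
    have hx : (0:ℝ) < x := hx
    rw [abs_of_pos hx]
    ring

lemma integrable_ff (m : ℕ) : Integrable (ff m) := by
  apply Integrable.mono' (integrable_base.const_mul (|1/(2*besselJ 2 2)| / m.factorial))
  · refine Measurable.aestronglyMeasurable ?_
    unfold ff
    exact ((measurable_const.mul ((measurable_abs.const_mul _).neg.exp)).mul measurable_gstep)
  · filter_upwards [] with δ
    exact ff_norm_le m δ

lemma summable_norm_int : Summable (fun m => ∫ δ, ‖ff m δ‖) := by
  set I : ℝ := ∫ δ : ℝ, ((13 + 6 * |δ|)/4 * exp (-(2 * |δ|))) with hI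
  apply summable_of_bound (K := |1/(2*besselJ 2 2)| * I)
  intro m
  have h0 : (0:ℝ) ≤ ∫ δ, ‖ff m δ‖ := integral_nonneg fun δ => norm_nonneg _
  rw [Real.norm_eq_abs, abs_of_nonneg h0]
  calc ∫ δ, ‖ff m δ‖
      ≤ ∫ δ, (|1/(2*besselJ 2 2)| / m.factorial) * ((13 + 6 * |δ|)/4 * exp (-(2 * |δ|))) :=
        integral_mono (integrable_ff m).norm
          (integrable_base.const_mul _) (ff_norm_le m)
    _ = (|1/(2*besselJ 2 2)| / m.factorial) * I := integral_const_mul _ _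
    _ = |1/(2*besselJ 2 2)| * I / m.factorial := by ring

lemma integral_ff (m : ℕ) :
    ∫ δ, ff m δ = (1/(2*besselJ 2 2)) * aa m *
      (3/((m:ℝ)+2) - 1/((m:ℝ)+2)^2 - (3/2)/((m:ℝ)+3) - (1/2)/((m:ℝ)+3)^2) := by
  have hk2 : (0:ℝ) < (m:ℝ)+2 := by positivity
  have hk3 : (0:ℝ) < (m:ℝ)+3 := by positivity
  rw [← intervalIntegral.integral_Iic_add_Ioi ((integrable_ff m).integrableOn) ((integrable_ff m).integrableOn)]
  have hIic : ∫ δ in Iic (0:ℝ), ff m δ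
      = (1/(2*besselJ 2 2)) * aa m / 4 * (8/((m:ℝ)+2) - 4/((m:ℝ)+2)^2)
        - (1/(2*besselJ 2 2)) * aa m / 4 * (5/((m:ℝ)+3) + 2/((m:ℝ)+3)^2) := by
    rw [integral_Iic_eq_integral_Iio]
    have heq : EqOn (ff m)
        (fun δ => (1/(2*besselJ 2 2)) * aa m / 4 * ((8 + 4*δ) * exp ((((m:ℝ)+2)) * δ))
          - (1/(2*besselJ 2 2)) * aa m / 4 * ((5 + (-2)*δ) * exp ((((m:ℝ)+3)) * δ))) (Iio 0) := by
      intro δ hδ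
      have hδ0 : δ < 0 := hδ
      beta_reduce
      unfold ff gstep
      rw [if_pos hδ0, abs_of_neg hδ0,
        show -(((m:ℝ)+2) * -δ) = ((m:ℝ)+2)*δ from by ring,
        show (((m:ℝ)+3))*δ = (((m:ℝ)+2))*δ + δ from by ring, Real.exp_add]
      ring
    rw [setIntegral_congr_fun measurableSet_Iio heq]
    rw [integral_sub (((integrableOn_le_Iio 8 4 _ hk2).const_mul _))
        (((integrableOn_le_Iio 5 (-2) _ hk3).const_mul _)),
      integral_const_mul, integral_const_mul,
      integral_Iio_le 8 4 _ hk2, integral_Iio_le 5 (-2) _ hk3]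
    ring
  have hIoi : ∫ δ in Ioi (0:ℝ), ff m δ
      = (1/(2*besselJ 2 2)) * aa m * (1/((m:ℝ)+2) + 0/((m:ℝ)+2)^2)
        - (1/(2*besselJ 2 2)) * aa m / 4 * (1/((m:ℝ)+3) + 0/((m:ℝ)+3)^2) := by
    have heq : EqOn (ff m)
        (fun δ => (1/(2*besselJ 2 2)) * aa m * ((1 + 0*δ) * exp (-((((m:ℝ)+2)) * δ)))
          - (1/(2*besselJ 2 2)) * aa m / 4 * ((1 + 0*δ) * exp (-((((m:ℝ)+3)) * δ)))) (Ioi 0) := by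
      intro δ hδ
      have hδ0 : (0:ℝ) < δ := hδ
      beta_reduce
      unfold ff gstep
      rw [if_neg (not_lt.mpr hδ0.le), abs_of_pos hδ0,
        show -((((m:ℝ)+3))*δ) = -((((m:ℝ)+2))*δ) + -δ from by ring, Real.exp_add]
      ring
    rw [setIntegral_congr_fun measurableSet_Ioi heq]
    rw [integral_sub (((integrableOn_le 1 0 _ hk2).const_mul _))
        (((integrableOn_le 1 0 _ hk3).const_mul _)),
      integral_const_mul, integral_const_mul,
      integral_Ioi_le 1 0 _ hk2, integral_Ioi_le 1 0 _ hk3]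
  rw [hIic, hIoi]
  ring

noncomputable def uu (m : ℕ) : ℝ := aa m * (1 - (3/2)/((m:ℝ)+2) - 1/((m:ℝ)+2)^2)

lemma aa_succ (m : ℕ) : aa (m+1) = -aa m / (((m:ℝ)+1) * ((m:ℝ)+2)) := by
  have h1 : ((m.factorial : ℝ)) ≠ 0 := ne_of_gt (fac_pos m)
  have h2 : (((m+1).factorial : ℝ)) ≠ 0 := ne_of_gt (fac_pos (m+1))
  have h3 : ((m:ℝ)+1) ≠ 0 := by positivity
  have h4 : ((m:ℝ)+2) ≠ 0 := by positivity
  unfold aa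
  rw [pow_succ]
  rw [show m+1+1 = m+2 from rfl, Nat.factorial_succ (m+1), Nat.factorial_succ m]
  push_cast
  field_simp
  ring

lemma key_identity (m : ℕ) :
    aa m * (3/((m:ℝ)+2) - 1/((m:ℝ)+2)^2 - (3/2)/((m:ℝ)+3) - (1/2)/((m:ℝ)+3)^2)
      = aa m * (3/((m:ℝ)+2) - 1) + (uu m - uu (m+1)) := by
  rw [uu, uu, aa_succ]
  have h1 : ((m:ℝ)+1) ≠ 0 := by positivity
  have h2 : ((m:ℝ)+2) ≠ 0 := by positivity
  have h3 : ((m:ℝ)+3) ≠ 0 := by positivity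
  push_cast
  field_simp
  ring

lemma sum_aa : Summable aa :=
  summable_of_bound 1 fun m => by
    rw [Real.norm_eq_abs, one_div]
    simpa using abs_aa m

lemma sum_uu : Summable uu := by
  apply summable_of_bound 2
  intro m
  have hm2 : (2:ℝ) ≤ (m:ℝ)+2 := by
    have := (Nat.cast_nonneg m : (0:ℝ) ≤ (m:ℝ)); linarith
  have ha : (0:ℝ) < (3/2)/((m:ℝ)+2) := by positivity
  have hb : (0:ℝ) < 1/((m:ℝ)+2)^2 := by positivity
  have ha' : (3/2)/((m:ℝ)+2) ≤ 3/4 := by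
    rw [div_le_iff₀ (by linarith)]; linarith
  have hb' : 1/((m:ℝ)+2)^2 ≤ 1/4 := by
    rw [div_le_div_iff₀ (by positivity) (by norm_num)]; nlinarith
  have habs : |1 - (3/2)/((m:ℝ)+2) - 1/((m:ℝ)+2)^2| ≤ 2 := by
    rw [abs_le]; constructor <;> nlinarith
  rw [Real.norm_eq_abs, uu, abs_mul]
  calc |aa m| * |1 - (3/2)/((m:ℝ)+2) - 1/((m:ℝ)+2)^2|
      ≤ (1/m.factorial) * 2 := mul_le_mul (abs_aa m) habs (abs_nonneg _) (by positivity)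
    _ = 2 / m.factorial := by ring

lemma sum_r : Summable (fun m => aa m * (3/((m:ℝ)+2) - 1)) := by
  apply summable_of_bound 2
  intro m
  have hm2 : (2:ℝ) ≤ (m:ℝ)+2 := by
    have := (Nat.cast_nonneg m : (0:ℝ) ≤ (m:ℝ)); linarith
  have ha : (0:ℝ) < 3/((m:ℝ)+2) := by positivity
  have ha' : 3/((m:ℝ)+2) ≤ 3/2 := by rw [div_le_iff₀ (by linarith)]; linarith
  have habs : |3/((m:ℝ)+2) - 1| ≤ 2 := by rw [abs_le]; constructor <;> nlinarith
  rw [Real.norm_eq_abs, abs_mul]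
  calc |aa m| * |3/((m:ℝ)+2) - 1|
      ≤ (1/m.factorial) * 2 := mul_le_mul (abs_aa m) habs (abs_nonneg _) (by positivity)
    _ = 2 / m.factorial := by ring

lemma sum_div : Summable (fun m => aa m / ((m:ℝ)+2)) := by
  apply summable_of_bound 1
  intro m
  have hm2 : (1:ℝ) ≤ (m:ℝ)+2 := by
    have := (Nat.cast_nonneg m : (0:ℝ) ≤ (m:ℝ)); linarith
  rw [Real.norm_eq_abs, abs_div, abs_of_pos (by linarith : (0:ℝ) < (m:ℝ)+2)]
  calc |aa m| / ((m:ℝ)+2) ≤ |aa m| := div_le_self (abs_nonneg _) hm2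
    _ ≤ 1/m.factorial := abs_aa m

lemma aa_div (m : ℕ) : aa m / ((m:ℝ)+2) = (-1:ℝ)^m / (m.factorial * (m+2).factorial) := by
  have h1 : ((m.factorial : ℝ)) ≠ 0 := ne_of_gt (fac_pos m)
  have h2 : (((m+1).factorial : ℝ)) ≠ 0 := ne_of_gt (fac_pos (m+1))
  have h4 : ((m:ℝ)+2) ≠ 0 := by positivity
  rw [aa, show m+2 = (m+1)+1 from rfl, Nat.factorial_succ (m+1)]
  push_cast
  field_simp
  ring

lemma uu_zero : uu 0 = 0 := by
  norm_num [uu, aa]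

lemma tsum_telescope : ∑' m, (uu m - uu (m+1)) = 0 := by
  have h1 : Summable (fun m => uu (m+1)) := (summable_nat_add_iff 1).mpr sum_uu
  rw [Summable.tsum_sub sum_uu h1]
  rw [Summable.tsum_eq_zero_add sum_uu, uu_zero, zero_add, sub_self]

lemma tsum_r : ∑' m, aa m * (3/((m:ℝ)+2) - 1) = 3 * besselJ 2 2 - besselJ 1 2 := by
  have heq : (fun m => aa m * (3/((m:ℝ)+2) - 1)) = fun m => 3 * (aa m / ((m:ℝ)+2)) - aa m :=
    funext fun m => by ring
  rw [heq, Summable.tsum_sub ((sum_div).mul_left 3) sum_aa, tsum_mul_left]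
  rw [tsum_congr aa_div, ← besselJ2_two, ← besselJ1_two]

lemma two_pow_le_fac (m : ℕ) : (2:ℝ)^(m+1) ≤ (m+2).factorial := by
  induction m with
  | zero => norm_num
  | succ n ih =>
    rw [pow_succ, Nat.factorial_succ]
    push_cast
    have h2 : (0:ℝ) < (2:ℝ)^(n+1) := by positivity
    nlinarith [(Nat.cast_nonneg n : (0:ℝ) ≤ (n:ℝ)), fac_pos (n+2)]

lemma J2_pos : 0 < besselJ 2 2 := by
  rw [besselJ2_two]
  set f : ℕ → ℝ := fun m => (-1:ℝ)^m / (m.factorial * (m+2).factorial) with hf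
  have hbd : ∀ m, ‖f m‖ ≤ 1 / m.factorial := by
    intro m
    have h1 : (0:ℝ) < m.factorial := fac_pos m
    have h2 : (1:ℝ) ≤ (m+2).factorial := by exact_mod_cast (m+2).factorial_pos
    rw [Real.norm_eq_abs, hf]
    have : |(-1:ℝ)^m / (m.factorial * (m+2).factorial)|
        = 1 / (m.factorial * (m+2).factorial) := by
      rw [abs_div, abs_pow, abs_neg, abs_one, one_pow, abs_of_pos (by positivity)]
    rw [this]
    apply one_div_le_one_div_of_le h1
    nlinarith
  have hs : Summable f := summable_of_bound 1 fun m => by simpa using hbd m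
  have hs1 : Summable (fun m => f (m+1)) := (summable_nat_add_iff 1).mpr hs
  have hs2 : Summable (fun m => f (m+1+1)) := (summable_nat_add_iff 1).mpr hs1
  rw [Summable.tsum_eq_zero_add hs, Summable.tsum_eq_zero_add hs1]
  have hT : |∑' m, f (m+1+1)| ≤ 1/24 := by
    have hgeo : Summable (fun m : ℕ => (1/48:ℝ) * (1/2)^m) :=
      (summable_geometric_of_lt_one (by norm_num) (by norm_num)).mul_left _
    have hbd2 : ∀ m : ℕ, ‖f (m+1+1)‖ ≤ (1/48:ℝ) * (1/2)^m := by
      intro m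
      have h1 : (2:ℝ)^(m+1) ≤ (m+2).factorial := two_pow_le_fac m
      have h2 : (1:ℝ) ≤ (m+4).factorial := by exact_mod_cast (m+4).factorial_pos
      have h3 : (0:ℝ) < (m+2).factorial := fac_pos (m+2)
      have h4 : (0:ℝ) < (m+4).factorial := fac_pos (m+4)
      rw [Real.norm_eq_abs, hf]
      have he : |(-1:ℝ)^(m+1+1) / ((m+1+1).factorial * (m+1+1+2).factorial)|
          = 1 / ((m+2).factorial * (m+4).factorial) := by
        rw [abs_div, abs_pow, abs_neg, abs_one, one_pow, abs_of_pos (by positivity)]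
      rw [he]
      have h24 : (24:ℝ) ≤ (m+4).factorial := by
        exact_mod_cast Nat.factorial_le (show 4 ≤ m+4 by omega)
      have hx : (48:ℝ) * 2^m ≤ (m+2).factorial * (m+4).factorial := by
        calc (48:ℝ) * 2^m = 2^(m+1) * 24 := by ring
          _ ≤ _ := mul_le_mul h1 h24 (by norm_num) (le_trans (by positivity) h1)
      calc 1/((m+2).factorial * (m+4).factorial : ℝ)
          ≤ 1/((48:ℝ) * 2^m) := one_div_le_one_div_of_le (by positivity) hx
        _ = (1/48:ℝ) * (1/2)^m := by
            rw [div_pow, one_pow]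
            simp only [one_div, mul_inv]
    have hnorm : Summable (fun m => ‖f (m+1+1)‖) := by
      refine hs2.abs.congr fun m => ?_
      rw [Real.norm_eq_abs]
    calc |∑' m, f (m+1+1)| ≤ ∑' m, ‖f (m+1+1)‖ := by
          simpa using norm_tsum_le_tsum_norm hnorm
      _ ≤ ∑' m : ℕ, (1/48:ℝ) * (1/2)^m := Summable.tsum_le_tsum hbd2 hnorm hgeo
      _ = (1/48) * 2 := by
          rw [tsum_mul_left, tsum_geometric_of_lt_one (by norm_num) (by norm_num)]
          norm_num
      _ = 1/24 := by norm_num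
  have h0 : f 0 = 1/2 := by norm_num [hf]
  have h1 : f 1 = -(1/6) := by
    rw [hf]
    norm_num [Nat.factorial]
  rw [h0, h1]
  have := abs_le.mp hT
  linarith [this.1]

end PercAux

/-- The percolation rate `χ = 3/2 − J₁(2)/(2J₂(2))` as an integral. -/
theorem percolation_rate_integral :
    ∫ δ : ℝ, ρstat δ * gstep δ = 3 / 2 - besselJ 1 2 / (2 * besselJ 2 2) := by
  have hJ : besselJ 2 2 ≠ 0 := ne_of_gt PercAux.J2_pos
  calc ∫ δ : ℝ, ρstat δ * gstep δ = ∫ δ : ℝ, ∑' m, PercAux.ff m δ := by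
        simp only [PercAux.hpt]
    _ = ∑' m, ∫ δ : ℝ, PercAux.ff m δ :=
        (integral_tsum_of_summable_integral_norm PercAux.integrable_ff
          PercAux.summable_norm_int).symm
    _ = ∑' m, (1/(2*besselJ 2 2)) * (PercAux.aa m * (3/((m:ℝ)+2) - 1)
          + (PercAux.uu m - PercAux.uu (m+1))) := by
        refine tsum_congr fun m => ?_
        rw [PercAux.integral_ff m, mul_assoc, PercAux.key_identity m]
    _ = (1/(2*besselJ 2 2)) * ((3 * besselJ 2 2 - besselJ 1 2) + 0) := by
        rw [tsum_mul_left]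
        congr 1
        rw [Summable.tsum_add PercAux.sum_r
            (PercAux.sum_uu.sub ((summable_nat_add_iff 1).mpr PercAux.sum_uu)),
          PercAux.tsum_r, PercAux.tsum_telescope]
    _ = 3/2 - besselJ 1 2 / (2 * besselJ 2 2) := by
        rw [add_zero]
        field_simp
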